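/- Let X, H be real normed spaces, F : X → ℝ twice differentiable, G : X → ℝ convex, α > 0, z : X → H linear continuous, δ > 0, τ > 0, C₂ ≥ 0. Suppose ū satisfies F'(ū)v + αG'(ū;v) ≥ 0 for all v, and for some u with v := u − ū: F'(ū)v + αG'(ū;v) > τ‖z(v)‖, ‖z(v)‖ ≤ 2τ/(δ+C₂), and F''(ū+θv)v² ≥ −C₂‖z(v)‖² for all θ ∈ [0,1]. Then using the Taylor expansion J(u) − J(ū) ≥ [F'(ū)v + αG'(ū;v)] + ½F''(ū+θv)v² for some θ ∈ (0,1), one obtains J(u) − J(ū) ≥ (δ/2)‖z(v)‖², where J = F + αG. -/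

import Mathlib

/-- Case II estimate in the proof of the second-order sufficient condition (Theorem 5.2):
if `ū` satisfies the first-order inequality, `v = u − ū` satisfies
`F'(ū)v + αG'(ū;v) > τ‖z(v)‖`, `‖z(v)‖ ≤ 2τ/(δ+C₂)`, and
`F''(ū+θv)v² ≥ −C₂‖z(v)‖²` for all `θ ∈ [0,1]`, then from the Taylor expansion
`J(u) − J(ū) ≥ [F'(ū)v + αG'(ū;v)] + ½F''(ū+θv)v²` (some `θ ∈ (0,1)`) one obtains
`J(u) − J(ū) ≥ (δ/2)‖z(v)‖²`, where `J = F + αG`. -/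
theorem stmt12 {X H : Type*} [NormedAddCommGroup X] [NormedSpace ℝ X]
    [NormedAddCommGroup H] [NormedSpace ℝ H]
    (F G : X → ℝ) (α δ τ C₂ : ℝ) (hα : 0 < α) (hδ : 0 < δ) (hτ : 0 < τ) (hC₂ : 0 ≤ C₂)
    (F' : X →L[ℝ] ℝ) (G' : X → ℝ) (F'' : X → X → ℝ) (z : X →L[ℝ] H)
    (ubar u : X)
    (hfo : ∀ w : X, 0 ≤ F' w + α * G' w)
    (hcase : F' (u - ubar) + α * G' (u - ubar) > τ * ‖z (u - ubar)‖)
    (hsmall : ‖z (u - ubar)‖ ≤ 2 * τ / (δ + C₂))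
    (hF'' : ∀ θ ∈ Set.Icc (0 : ℝ) 1,
      F'' (ubar + θ • (u - ubar)) (u - ubar) ≥ -C₂ * ‖z (u - ubar)‖ ^ 2)
    (hTaylor : ∃ θ ∈ Set.Ioo (0 : ℝ) 1,
      (F u + α * G u) - (F ubar + α * G ubar) ≥
        (F' (u - ubar) + α * G' (u - ubar)) +
          (1 / 2) * F'' (ubar + θ • (u - ubar)) (u - ubar)) :
    (F u + α * G u) - (F ubar + α * G ubar) ≥ (δ / 2) * ‖z (u - ubar)‖ ^ 2 := by
  obtain ⟨θ, hθ, hT⟩ := hTaylor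
  have hF := hF'' θ ⟨le_of_lt hθ.1, le_of_lt hθ.2⟩
  set n := ‖z (u - ubar)‖ with hn
  have hn0 : 0 ≤ n := norm_nonneg _
  have key : τ * n ≥ ((δ + C₂) / 2) * n ^ 2 := by
    have h1 : ((δ + C₂) / 2) * n ^ 2 ≤ ((δ + C₂) / 2) * ((2 * τ / (δ + C₂)) * n) := by
      apply mul_le_mul_of_nonneg_left _ (by positivity)
      calc n ^ 2 = n * n := sq n
        _ ≤ (2 * τ / (δ + C₂)) * n := mul_le_mul_of_nonneg_right hsmall hn0
    have h2 : ((δ + C₂) / 2) * ((2 * τ / (δ + C₂)) * n) = τ * n := by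
      field_simp
    linarith [h1, h2.symm.le]
  nlinarith [hT, hF, hcase, key]
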